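/- The word (0001)^ω contains no factor of the form g(x)·x·x·g(x), where x is a nonempty binary word and g(x) is the reverse complement of x. -/

import Mathlib

/-- `L` is a factor of the periodic infinite word `(0001)^ω`. -/
def IsFactorP (L : List Bool) : Prop :=
  ∃ n, L <:+: (List.replicate n [false, false, false, true]).flatten

private def Pd : List Bool := [false, false, false, true]

private lemma flatten_succ (n : ℕ) :
    (List.replicate (n+1) Pd).flatten = Pd ++ (List.replicate n Pd).flatten := by
  simp [List.replicate_succ]

private lemma pre_bound : ∀ n (L : List Bool),
    L <+: (List.replicate n Pd).flatten → 4 * L.count true ≤ L.length := by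
  intro n
  induction n with
  | zero =>
    intro L h
    simp only [List.replicate_zero, List.flatten_nil, List.prefix_nil] at h
    subst h; simp
  | succ n ih =>
    intro L h
    rw [flatten_succ] at h
    obtain ⟨t, ht⟩ := h
    match L with
    | [] => simp
    | [a] =>
      simp only [Pd, List.cons_append, List.nil_append, List.cons.injEq] at ht
      obtain ⟨rfl, -⟩ := ht
      simp
    | [a, b] =>
      simp only [Pd, List.cons_append, List.nil_append, List.cons.injEq] at ht
      obtain ⟨rfl, rfl, -⟩ := ht
      simp
    | [a, b, c] =>
      simp only [Pd, List.cons_append, List.nil_append, List.cons.injEq] at ht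
      obtain ⟨rfl, rfl, rfl, -⟩ := ht
      simp
    | a :: b :: c :: d :: L' =>
      simp only [Pd, List.cons_append, List.cons.injEq] at ht
      obtain ⟨rfl, rfl, rfl, rfl, ht⟩ := ht
      have h' : L' <+: (List.replicate n Pd).flatten := ⟨t, ht⟩
      have := ih L' h'
      simp only [List.count_cons, List.length_cons]
      norm_num
      omega

private lemma suf_decomp : ∀ n (S : List Bool),
    S <:+ (List.replicate n Pd).flatten →
    ∃ r k, S = r ++ (List.replicate k Pd).flatten ∧
      (r = [] ∨ r = [true] ∨ r = [false, true] ∨ r = [false, false, true]) := by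
  intro n
  induction n with
  | zero =>
    intro S h
    simp only [List.replicate_zero, List.flatten_nil, List.suffix_nil] at h
    exact ⟨[], 0, by simp [h], Or.inl rfl⟩
  | succ n ih =>
    intro S h
    rw [flatten_succ] at h
    obtain ⟨u, hu⟩ := h
    match u with
    | [] =>
      refine ⟨[], n + 1, ?_, Or.inl rfl⟩
      rw [List.nil_append, flatten_succ]
      simpa using hu
    | [a] =>
      simp only [Pd, List.cons_append, List.nil_append, List.cons.injEq] at hu
      obtain ⟨-, hu⟩ := hu
      exact ⟨[false, false, true], n, by simp [Pd, hu], by simp⟩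
    | [a, b] =>
      simp only [Pd, List.cons_append, List.nil_append, List.cons.injEq] at hu
      obtain ⟨-, -, hu⟩ := hu
      exact ⟨[false, true], n, by simp [Pd, hu], by simp⟩
    | [a, b, c] =>
      simp only [Pd, List.cons_append, List.nil_append, List.cons.injEq] at hu
      obtain ⟨-, -, -, hu⟩ := hu
      exact ⟨[true], n, by simp [Pd, hu], by simp⟩
    | a :: b :: c :: d :: u' =>
      simp only [Pd, List.cons_append, List.cons.injEq] at hu
      obtain ⟨-, -, -, -, hu⟩ := hu
      exact ih S ⟨u', hu⟩

private lemma r_take_bound (r : List Bool)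
    (hr : r = [] ∨ r = [true] ∨ r = [false, true] ∨ r = [false, false, true]) (m : ℕ) :
    4 * (r.take m).count true ≤ (r.take m).length + 3 := by
  rcases hr with rfl | rfl | rfl | rfl <;>
    match m with
    | 0 => simp
    | 1 => simp
    | 2 => simp
    | (k+3) => simp

private lemma infix_bound (n : ℕ) (L : List Bool)
    (h : L <:+: (List.replicate n Pd).flatten) :
    4 * L.count true ≤ L.length + 3 := by
  obtain ⟨s, t, hst⟩ := h
  have hsuf : L ++ t <:+ (List.replicate n Pd).flatten := ⟨s, by rw [← hst]; simp⟩
  obtain ⟨r, k, hS, hr⟩ := suf_decomp n (L ++ t) hsuf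
  have hLpre : L <+: r ++ (List.replicate k Pd).flatten := ⟨t, hS⟩
  have hLtake : L = (r.take L.length) ++
      (((List.replicate k Pd).flatten).take (L.length - r.length)) := by
    conv_lhs => rw [List.prefix_iff_eq_take.mp hLpre]
    rw [List.take_append]
  have h1 := r_take_bound r hr L.length
  have h2 : 4 * (((List.replicate k Pd).flatten).take (L.length - r.length)).count true ≤
      (((List.replicate k Pd).flatten).take (L.length - r.length)).length :=
    pre_bound k _ (List.take_prefix _ _)
  rw [hLtake]
  simp only [List.count_append, List.length_append]
  omega

private lemma count_not (x : List Bool) :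
    (x.map (fun b => !b)).count true = x.length - x.count true := by
  induction x with
  | nil => simp
  | cons a l ih =>
    have hc : l.count true ≤ l.length := List.count_le_length
    cases a <;> simp [List.count_cons, ih] <;> omega

theorem stmt5 (x : List Bool) (hx : x ≠ []) :
    ¬ IsFactorP ((List.map (fun b => !b) x).reverse ++ x ++ x ++ (List.map (fun b => !b) x).reverse) := by
  rintro ⟨n, h⟩
  have hb := infix_bound n _ h
  have hc : x.count true ≤ x.length := List.count_le_length
  have hcn := count_not x
  have hlen : 0 < x.length := List.length_pos_iff.mpr hx
  simp only [List.count_append, List.length_append, List.count_reverse, List.length_reverse,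
    List.length_map, hcn] at hb
  omega
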